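/- arXiv:1804.01369 — 5 statements merged into one kernel-verified Lean document; each statement's English description precedes it below -/
import Mathlib

section
/- Let p ≥ 2 be an integer. There exists a continuous (atomless) Borel probability measure μ on 𝕋 such that inf_{k≥0} |μ̂(p^k)| > 0. -/
open MeasureTheory Filter Topology

noncomputable instance : MeasurableSpace Circle := borel Circle
instance : BorelSpace Circle := ⟨rfl⟩

/-- Fourier coefficient `μ̂(n) = ∫ λ^n dμ(λ)` of a measure on the circle. -/
noncomputable def fc (μ : Measure Circle) (n : ℤ) : ℂ := ∫ z : Circle, (z : ℂ) ^ n ∂μ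

namespace Lac

/-! ### Generic 0/1-digit series lemmas -/

variable {c : ℝ}

lemma geom_summable (hc0 : 0 ≤ c) (hc1 : c < 1) : Summable (fun i : ℕ => c ^ (i + 1)) := by
  simpa [pow_succ, mul_comm] using (summable_geometric_of_lt_one hc0 hc1).mul_left c

lemma sum01_summable (hc0 : 0 ≤ c) (hc1 : c < 1) {a : ℕ → ℝ} (ha0 : ∀ i, 0 ≤ a i)
    (ha1 : ∀ i, a i ≤ 1) : Summable (fun i => a i * c ^ (i + 1)) := by
  refine Summable.of_nonneg_of_le (fun i => mul_nonneg (ha0 i) (pow_nonneg hc0 _)) (fun i => ?_)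
    (geom_summable hc0 hc1)
  nlinarith [pow_nonneg hc0 (i + 1), ha0 i, ha1 i]

lemma sum01_nonneg (hc0 : 0 ≤ c) {a : ℕ → ℝ} (ha0 : ∀ i, 0 ≤ a i) :
    0 ≤ ∑' i : ℕ, a i * c ^ (i + 1) :=
  tsum_nonneg fun i => mul_nonneg (ha0 i) (pow_nonneg hc0 _)

lemma sum01_le (hc0 : 0 ≤ c) (hc1 : c < 1) {a : ℕ → ℝ} (ha0 : ∀ i, 0 ≤ a i)
    (ha1 : ∀ i, a i ≤ 1) : ∑' i : ℕ, a i * c ^ (i + 1) ≤ c / (1 - c) := by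
  have h1 : ∑' i : ℕ, a i * c ^ (i + 1) ≤ ∑' i : ℕ, c ^ (i + 1) := by
    refine Summable.tsum_le_tsum (fun i => ?_) (sum01_summable hc0 hc1 ha0 ha1) (geom_summable hc0 hc1)
    nlinarith [pow_nonneg hc0 (i + 1), ha0 i, ha1 i]
  have h2 : ∑' i : ℕ, c ^ (i + 1) = c / (1 - c) := by
    have : ∑' i : ℕ, c ^ (i + 1) = c * ∑' i : ℕ, c ^ i := by
      rw [← tsum_mul_left]
      exact tsum_congr fun i => by ring
    rw [this, tsum_geometric_of_lt_one hc0 hc1, div_eq_mul_inv]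
  linarith

lemma sum01_shift (hc0 : 0 ≤ c) (hc1 : c < 1) {a : ℕ → ℝ} (ha0 : ∀ i, 0 ≤ a i)
    (ha1 : ∀ i, a i ≤ 1) :
    ∑' i : ℕ, a i * c ^ (i + 1) = a 0 * c + c * ∑' i : ℕ, a (i + 1) * c ^ (i + 1) := by
  rw [Summable.tsum_eq_zero_add (sum01_summable hc0 hc1 ha0 ha1)]
  have : ∑' i : ℕ, a (i + 1) * c ^ (i + 1 + 1) = c * ∑' i : ℕ, a (i + 1) * c ^ (i + 1) := by
    rw [← tsum_mul_left]
    exact tsum_congr fun i => by ring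
  rw [this]; ring_nf

lemma sum01_head (hc0 : 0 < c) (hc3 : c ≤ 1 / 3) {a b : ℕ → ℝ}
    (ha : ∀ i, a i = 0 ∨ a i = 1) (hb : ∀ i, b i = 0 ∨ b i = 1)
    (h : ∑' i : ℕ, a i * c ^ (i + 1) = ∑' i : ℕ, b i * c ^ (i + 1)) :
    a 0 = b 0 ∧ ∑' i : ℕ, a (i + 1) * c ^ (i + 1) = ∑' i : ℕ, b (i + 1) * c ^ (i + 1) := by
  have hc1 : c < 1 := by linarith
  have ha0 : ∀ i, 0 ≤ a i := fun i => by rcases ha i with h | h <;> rw [h] <;> norm_num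
  have ha1 : ∀ i, a i ≤ 1 := fun i => by rcases ha i with h | h <;> rw [h] <;> norm_num
  have hb0 : ∀ i, 0 ≤ b i := fun i => by rcases hb i with h | h <;> rw [h] <;> norm_num
  have hb1 : ∀ i, b i ≤ 1 := fun i => by rcases hb i with h | h <;> rw [h] <;> norm_num
  set A := ∑' i : ℕ, a (i + 1) * c ^ (i + 1) with hA
  set B := ∑' i : ℕ, b (i + 1) * c ^ (i + 1) with hB
  have hAle : A ≤ c / (1 - c) := sum01_le hc0.le hc1 (fun i => ha0 _) (fun i => ha1 _)
  have hBle : B ≤ c / (1 - c) := sum01_le hc0.le hc1 (fun i => hb0 _) (fun i => hb1 _)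
  have hA0 : 0 ≤ A := sum01_nonneg hc0.le (fun i => ha0 _)
  have hB0 : 0 ≤ B := sum01_nonneg hc0.le (fun i => hb0 _)
  have hhalf : c / (1 - c) ≤ 1 / 2 := by
    rw [div_le_iff₀ (by linarith)]; linarith
  have heq : a 0 * c + c * A = b 0 * c + c * B := by
    rw [← sum01_shift hc0.le hc1 ha0 ha1, ← sum01_shift hc0.le hc1 hb0 hb1, h]
  have hab : a 0 = b 0 := by
    rcases ha 0 with h1 | h1 <;> rcases hb 0 with h2 | h2 <;> rw [h1, h2] <;>
      rw [h1, h2] at heq <;> nlinarith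
  refine ⟨hab, ?_⟩
  rw [hab] at heq
  have := mul_left_cancel₀ (ne_of_gt hc0) (by linarith : c * A = c * B)
  exact this

lemma sum01_inj (hc0 : 0 < c) (hc3 : c ≤ 1 / 3) {a b : ℕ → ℝ}
    (ha : ∀ i, a i = 0 ∨ a i = 1) (hb : ∀ i, b i = 0 ∨ b i = 1)
    (h : ∑' i : ℕ, a i * c ^ (i + 1) = ∑' i : ℕ, b i * c ^ (i + 1)) : ∀ n, a n = b n := by
  have key : ∀ n, ∑' i : ℕ, a (n + i) * c ^ (i + 1) = ∑' i : ℕ, b (n + i) * c ^ (i + 1) := by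
    intro n
    induction n with
    | zero => simpa using h
    | succ n ih =>
      have := (sum01_head hc0 hc3 (fun i => ha (n + i)) (fun i => hb (n + i)) ih).2
      have e1 : ∀ f : ℕ → ℝ, ∑' i : ℕ, f (n + 1 + i) * c ^ (i + 1)
          = ∑' i : ℕ, f (n + (i + 1)) * c ^ (i + 1) := fun f =>
        tsum_congr fun i => by rw [show n + 1 + i = n + (i + 1) from by omega]
      rw [e1 a, e1 b]; exact this
  intro n
  have := (sum01_head hc0 hc3 (fun i => ha (n + i)) (fun i => hb (n + i)) (key n)).1
  simpa using this

end Lac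

/-! ### Digits on the line -/

namespace Lac

noncomputable def vb (q : ℕ) (j : ℕ) (t : ℝ) : ℝ :=
  if Int.fract ((q : ℝ) ^ j * t) < (q : ℝ)⁻¹ then 0 else 1

noncomputable def Xf (q : ℕ) (t : ℝ) : ℝ := ∑' i : ℕ, vb q i t * ((q : ℝ)⁻¹) ^ (i + 1)

noncomputable def Tq (q : ℕ) (t : ℝ) : ℝ := Int.fract ((q : ℝ) * t)

noncomputable def ff (q : ℕ) (t : ℝ) : Circle := Circle.exp (2 * Real.pi * Xf q t)

variable {q : ℕ}

lemma vb01 (j : ℕ) (t : ℝ) : vb q j t = 0 ∨ vb q j t = 1 := by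
  unfold vb; split <;> simp

lemma vb_nonneg (j : ℕ) (t : ℝ) : 0 ≤ vb q j t := by
  rcases vb01 (q := q) j t with h | h <;> rw [h] <;> norm_num

lemma vb_le_one (j : ℕ) (t : ℝ) : vb q j t ≤ 1 := by
  rcases vb01 (q := q) j t with h | h <;> rw [h] <;> norm_num

lemma qpos (hq : 3 ≤ q) : (0 : ℝ) < q := by
  have : (3 : ℝ) ≤ q := by exact_mod_cast hq
  linarith

lemma cpos (hq : 3 ≤ q) : (0 : ℝ) < (q : ℝ)⁻¹ := inv_pos.2 (qpos hq)

lemma c3 (hq : 3 ≤ q) : (q : ℝ)⁻¹ ≤ 1 / 3 := by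
  have h : (3:ℝ) ≤ q := by exact_mod_cast hq
  rw [inv_le_comm₀ (qpos hq) (by norm_num)]
  calc ((1:ℝ)/3)⁻¹ = 3 := by norm_num
    _ ≤ q := h

lemma c1 (hq : 3 ≤ q) : (q : ℝ)⁻¹ < 1 := lt_of_le_of_lt (c3 hq) (by norm_num)

lemma Xf_nonneg (hq : 3 ≤ q) (t : ℝ) : 0 ≤ Xf q t :=
  sum01_nonneg (cpos hq).le (fun i => vb_nonneg i t)

lemma Xf_le_half (hq : 3 ≤ q) (t : ℝ) : Xf q t ≤ 1 / 2 := by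
  have h := sum01_le (cpos hq).le (c1 hq) (fun i => vb_nonneg (q := q) i t)
    (fun i => vb_le_one i t)
  have hc3 := c3 hq
  have hc0 := cpos hq
  have : (q:ℝ)⁻¹ / (1 - (q:ℝ)⁻¹) ≤ 1 / 2 := by
    rw [div_le_iff₀ (by linarith)]; linarith
  exact le_trans h this

lemma Xf_le (hq : 3 ≤ q) (t : ℝ) : Xf q t ≤ 2 * (q : ℝ)⁻¹ := by
  have h := sum01_le (cpos hq).le (c1 hq) (fun i => vb_nonneg (q := q) i t)
    (fun i => vb_le_one i t)
  have hc3 := c3 hq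
  have hc0 := cpos hq
  have : (q:ℝ)⁻¹ / (1 - (q:ℝ)⁻¹) ≤ 2 * (q : ℝ)⁻¹ := by
    rw [div_le_iff₀ (by linarith)]; nlinarith
  exact le_trans h this

lemma vb_succ (j : ℕ) (t : ℝ) : vb q (j + 1) t = vb q j (Tq q t) := by
  suffices h : Int.fract ((q : ℝ) ^ j * Tq q t) = Int.fract ((q : ℝ) ^ (j + 1) * t) by
    rw [vb, vb, h]
  have h1 : (q : ℝ) ^ j * Tq q t
      = (q : ℝ) ^ (j + 1) * t - (((q : ℤ) ^ j * ⌊(q : ℝ) * t⌋ : ℤ) : ℝ) := by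
    rw [Tq, Int.fract]
    push_cast
    ring
  rw [h1, Int.fract_sub_intCast]

lemma Xf_shift (hq : 3 ≤ q) (t : ℝ) : Xf q (Tq q t) = q * Xf q t - vb q 0 t := by
  have h := sum01_shift (cpos hq).le (c1 hq) (fun i => vb_nonneg (q := q) i t)
    (fun i => vb_le_one i t)
  have h2 : ∑' i : ℕ, vb q (i + 1) t * ((q : ℝ)⁻¹) ^ (i + 1) = Xf q (Tq q t) := by
    rw [Xf]
    exact tsum_congr fun i => by rw [vb_succ]
  have hX : Xf q t = vb q 0 t * (q:ℝ)⁻¹ + (q:ℝ)⁻¹ * Xf q (Tq q t) := by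
    rw [Xf, h, h2]
  have hq0 : (q : ℝ) ≠ 0 := (qpos hq).ne'
  rw [eq_sub_iff_add_eq, hX]
  field_simp
  ring

lemma measurable_vb (j : ℕ) : Measurable (vb q j) := by
  unfold vb
  exact Measurable.ite
    (measurableSet_lt ((measurable_id.const_mul ((q : ℝ) ^ j)).fract) measurable_const)
    measurable_const measurable_const

lemma measurable_Xf (hq : 3 ≤ q) : Measurable (Xf q) := by
  have : ∀ t, Tendsto (fun n => ∑ i ∈ Finset.range n, vb q i t * ((q : ℝ)⁻¹) ^ (i + 1))
      atTop (𝓝 (Xf q t)) := fun t =>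
    (sum01_summable (cpos hq).le (c1 hq) (fun i => vb_nonneg i t)
      (fun i => vb_le_one i t)).hasSum.tendsto_sum_nat
  exact measurable_of_tendsto_metrizable
    (fun n => Finset.measurable_sum _ fun i _ => (measurable_vb i).mul_const _) 
    (tendsto_pi_nhds.2 this)

lemma measurable_ff (hq : 3 ≤ q) : Measurable (ff q) :=
  Circle.exp.continuous.measurable.comp ((measurable_Xf hq).const_mul _)

lemma coe_ff (t : ℝ) : (ff q t : ℂ) = Complex.exp ((2 * Real.pi * Xf q t : ℝ) * Complex.I) :=
  rfl

lemma coe_ff_pow (n : ℕ) (t : ℝ) :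
    ((ff q t ^ n : Circle) : ℂ) = Complex.exp ((n : ℂ) * ((2 * Real.pi * Xf q t : ℝ) * Complex.I)) := by
  have h1 : ((ff q t ^ n : Circle) : ℂ) = ((ff q t : ℂ)) ^ n := by
    show Circle.coeHom (ff q t ^ n) = (Circle.coeHom (ff q t)) ^ n
    exact map_pow _ _ _
  rw [h1, coe_ff, ← Complex.exp_nat_mul]

lemma ff_pow_q (hq : 3 ≤ q) (t : ℝ) : ff q t ^ q = ff q (Tq q t) := by
  apply Circle.coe_injective
  rw [coe_ff_pow, coe_ff, Xf_shift hq]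
  rcases vb01 (q := q) 0 t with h | h <;> rw [h]
  · congr 1
    push_cast
    ring
  · rw [show ((2 * Real.pi * ((q:ℝ) * Xf q t - 1) : ℝ) : ℂ) * Complex.I
        = ((2 * Real.pi * Xf q t : ℝ) : ℂ) * Complex.I * (q:ℂ)
          + (-1 : ℤ) * (2 * Real.pi * Complex.I) from by push_cast; ring]
    rw [Complex.exp_add, Complex.exp_int_mul_two_pi_mul_I, mul_one]
    congr 1
    push_cast
    ring

end Lac

/-! ### The map `t ↦ fract (q t)` preserves Lebesgue measure on `[0,1)` -/

namespace Lac

open Set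

variable {q : ℕ}

lemma vol_gd (hq : 3 ≤ q) (d : ℕ) {B : Set ℝ} (hB : MeasurableSet B) :
    volume ((fun t : ℝ => (q : ℝ) * t - d) ⁻¹' B) = volume B / q := by
  have hq0 : (q : ℝ) ≠ 0 := (qpos hq).ne'
  have h1 : (fun t : ℝ => (q : ℝ) * t - d) ⁻¹' B
      = ((q : ℝ) * ·) ⁻¹' ((· + (-(d:ℝ))) ⁻¹' B) := by
    ext t; simp [sub_eq_add_neg]
  rw [h1, Real.volume_preimage_mul_left hq0, measure_preimage_add_right]
  rw [abs_of_pos (inv_pos.2 (qpos hq))]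
  rw [ENNReal.ofReal_inv_of_pos (qpos hq), ENNReal.ofReal_natCast, ENNReal.div_eq_inv_mul]

lemma measurable_Tq : Measurable (Tq q) :=
  (measurable_id.const_mul ((q : ℝ))).fract

lemma Tq_mem_I (t : ℝ) : Tq q t ∈ Ico (0 : ℝ) 1 :=
  ⟨Int.fract_nonneg _, Int.fract_lt_one _⟩

lemma floor_eq_of {t : ℝ} {d : ℕ} (h0 : 0 ≤ (q : ℝ) * t - d)
    (h1 : (q : ℝ) * t - d < 1) : ⌊(q : ℝ) * t⌋ = d := by
  rw [Int.floor_eq_iff]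
  constructor
  · push_cast; linarith
  · push_cast; linarith

lemma Tq_decomp (hq : 3 ≤ q) {B : Set ℝ} (hBI : B ⊆ Ico 0 1) :
    Tq q ⁻¹' B ∩ Ico (0 : ℝ) 1
      = ⋃ d ∈ Finset.range q, (fun t : ℝ => (q : ℝ) * t - d) ⁻¹' B := by
  have hqR : (0 : ℝ) < q := qpos hq
  ext t
  simp only [mem_inter_iff, mem_preimage, Set.mem_iUnion, Finset.mem_range]
  constructor
  · rintro ⟨hTB, ht0, ht1⟩
    have hfl0 : 0 ≤ ⌊(q : ℝ) * t⌋ := Int.floor_nonneg.2 (by positivity)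
    have hflq : ⌊(q : ℝ) * t⌋ < (q : ℤ) := Int.floor_lt.2 (by push_cast; nlinarith)
    refine ⟨⌊(q : ℝ) * t⌋.toNat, by omega, ?_⟩
    show ((q : ℝ) * t - _) ∈ B
    rw [show ((⌊(q : ℝ) * t⌋.toNat : ℕ) : ℝ) = ((⌊(q : ℝ) * t⌋ : ℤ) : ℝ) by
      rw [← Int.cast_natCast, Int.toNat_of_nonneg hfl0]]
    rw [Int.self_sub_floor]
    exact hTB
  · rintro ⟨d, hd, hdB⟩
    have hmem := hBI hdB
    have h0 : 0 ≤ (q : ℝ) * t - d := hmem.1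
    have h1 : (q : ℝ) * t - d < 1 := hmem.2
    have hfl : ⌊(q : ℝ) * t⌋ = d := floor_eq_of h0 h1
    have hTq : Tq q t = (q : ℝ) * t - d := by
      rw [Tq, Int.fract, hfl]; push_cast; ring
    refine ⟨by rw [hTq]; exact hdB, ?_, ?_⟩
    · have : (0 : ℝ) ≤ d := by positivity
      nlinarith
    · have hdq : (d : ℝ) + 1 ≤ q := by exact_mod_cast hd
      nlinarith

lemma vol_Tq_preimage (hq : 3 ≤ q) {B : Set ℝ} (hB : MeasurableSet B) (hBI : B ⊆ Ico 0 1) :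
    volume (Tq q ⁻¹' B ∩ Ico (0 : ℝ) 1) = volume B := by
  rw [Tq_decomp hq hBI]
  have hdisj : (↑(Finset.range q) : Set ℕ).PairwiseDisjoint
      (fun d : ℕ => (fun t : ℝ => (q : ℝ) * t - d) ⁻¹' B) := by
    intro d _ e _ hde
    refine Set.disjoint_left.2 fun {t} htd hte => hde ?_
    have h1 := hBI htd
    have h2 := hBI hte
    simp only [Set.mem_Ico] at h1 h2
    obtain ⟨h1a, h1b⟩ := h1
    obtain ⟨h2a, h2b⟩ := h2
    have hde1 : (d : ℝ) < (e : ℝ) + 1 := by linarith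
    have hde2 : (e : ℝ) < (d : ℝ) + 1 := by linarith
    have hd1 : d < e + 1 := by exact_mod_cast (by push_cast; linarith : (d:ℝ) < ((e+1 : ℕ) : ℝ))
    have hd2 : e < d + 1 := by exact_mod_cast (by push_cast; linarith : (e:ℝ) < ((d+1 : ℕ) : ℝ))
    omega
  rw [measure_biUnion_finset hdisj
    (fun d _ => ((measurable_id.const_mul _).sub measurable_const) hB)]
  have : ∀ d ∈ Finset.range q, volume ((fun t : ℝ => (q : ℝ) * t - d) ⁻¹' B) = volume B / q :=
    fun d _ => vol_gd hq d hB
  rw [Finset.sum_congr rfl this, Finset.sum_const, Finset.card_range, nsmul_eq_mul]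
  exact ENNReal.mul_div_cancel (by exact_mod_cast (by omega : q ≠ 0)) (ENNReal.natCast_ne_top q)

lemma measurePreserving_Tq (hq : 3 ≤ q) :
    MeasurePreserving (Tq q) (volume.restrict (Ico (0:ℝ) 1)) (volume.restrict (Ico (0:ℝ) 1)) := by
  refine ⟨measurable_Tq, ?_⟩
  refine Measure.ext fun s hs => ?_
  rw [Measure.map_apply measurable_Tq hs, Measure.restrict_apply (measurable_Tq hs),
    Measure.restrict_apply hs]
  have h1 : Tq q ⁻¹' s ∩ Ico (0:ℝ) 1 = Tq q ⁻¹' (s ∩ Ico 0 1) ∩ Ico (0:ℝ) 1 := by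
    ext t
    simp only [mem_inter_iff, mem_preimage]
    exact ⟨fun ⟨h, ht⟩ => ⟨⟨h, Tq_mem_I t⟩, ht⟩, fun ⟨⟨h, _⟩, ht⟩ => ⟨h, ht⟩⟩
  rw [h1, vol_Tq_preimage hq (hs.inter measurableSet_Ico) Set.inter_subset_right]

end Lac

/-! ### Cylinder sets -/

namespace Lac

open Set ENNReal

variable {q : ℕ}

def Cyl (q : ℕ) (n : ℕ) (β : ℕ → ℝ) : Set ℝ := {t | ∀ j < n, vb q j t = β j}

lemma measurable_Cyl (n : ℕ) (β : ℕ → ℝ) : MeasurableSet (Cyl q n β) := by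
  have : Cyl q n β = ⋂ j ∈ Finset.range n, (vb q j) ⁻¹' {β j} := by
    ext t; simp [Cyl]
  rw [this]
  exact MeasurableSet.biInter (Finset.range n).countable_toSet
    fun j _ => (measurable_vb j) (measurableSet_singleton _)

lemma Cyl_succ_subset (hq : 3 ≤ q) (n : ℕ) (β : ℕ → ℝ) :
    Cyl q (n + 1) β ∩ Ico (0:ℝ) 1 ⊆
      ⋃ d ∈ (if β 0 = 0 then ({0} : Finset ℕ) else (Finset.range q).erase 0),
        (fun t : ℝ => (q : ℝ) * t - d) ⁻¹' (Cyl q n (fun j => β (j + 1)) ∩ Ico (0:ℝ) 1) := by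
  have hqR : (0 : ℝ) < q := qpos hq
  intro t ⟨htC, ht0, ht1⟩
  have hfl0 : 0 ≤ ⌊(q : ℝ) * t⌋ := Int.floor_nonneg.2 (by positivity)
  have hflq : ⌊(q : ℝ) * t⌋ < (q : ℤ) := Int.floor_lt.2 (by push_cast; nlinarith)
  set d := ⌊(q : ℝ) * t⌋.toNat with hd
  have hdr : ((d : ℕ) : ℝ) = ((⌊(q : ℝ) * t⌋ : ℤ) : ℝ) := by
    rw [hd, ← Int.cast_natCast, Int.toNat_of_nonneg hfl0]
  have hTq : Tq q t = (q : ℝ) * t - d := by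
    rw [Tq, Int.fract, hdr]
  have hTmem : Tq q t ∈ Ico (0:ℝ) 1 := Tq_mem_I t
  have hTC : Tq q t ∈ Cyl q n (fun j => β (j + 1)) := by
    intro j hj
    rw [← vb_succ]
    exact htC (j + 1) (by omega)
  -- value of vb 0 t
  have hvb0 : vb q 0 t = (if t < (q:ℝ)⁻¹ then 0 else 1) := by
    rw [vb]
    congr 1
    rw [pow_zero, one_mul, Int.fract_eq_self.2 ⟨ht0, ht1⟩]
  have hβ0 : vb q 0 t = β 0 := htC 0 (by omega)
  simp only [Set.mem_iUnion]
  refine ⟨d, ?_, ?_⟩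
  · -- d in the appropriate finset
    by_cases hc : t < (q:ℝ)⁻¹
    · have : β 0 = 0 := by rw [← hβ0, hvb0, if_pos hc]
      rw [this]
      simp only [if_pos rfl, Finset.mem_singleton]
      have : (q : ℝ) * t < 1 := by
        rw [← mul_inv_cancel₀ hqR.ne']
        exact mul_lt_mul_of_pos_left hc hqR
      have : ⌊(q : ℝ) * t⌋ = 0 := by
        have hlt1 : ⌊(q : ℝ) * t⌋ < (1 : ℤ) := Int.floor_lt.2 (by push_cast; linarith)
        omega
      simp [hd, this]
    · have hβ1 : β 0 = 1 := by rw [← hβ0, hvb0, if_neg hc]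
      rw [hβ1]
      have h01 : ¬ ((1:ℝ) = 0) := by norm_num
      rw [if_neg h01]
      push_neg at hc
      have hge : (1:ℝ) ≤ (q : ℝ) * t := by
        rw [← mul_inv_cancel₀ hqR.ne']
        exact mul_le_mul_of_nonneg_left hc hqR.le
      have : (1 : ℤ) ≤ ⌊(q : ℝ) * t⌋ := by
        rw [Int.le_floor]; push_cast; linarith
      refine Finset.mem_erase.2 ⟨by omega, Finset.mem_range.2 (by omega)⟩
  · have hmem : Tq q t ∈ (Cyl q n fun j => β (j + 1)) ∩ Ico (0:ℝ) 1 := ⟨hTC, hTmem⟩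
    rw [hTq] at hmem
    exact hmem

lemma Cyl_bound (hq : 3 ≤ q) (β : ℕ → ℝ) (n : ℕ) :
    volume (Cyl q n β ∩ Ico (0:ℝ) 1) ≤ (((q - 1 : ℕ) : ℝ≥0∞) / q) ^ n := by
  induction n generalizing β with
  | zero =>
    have : Cyl q 0 β = univ := by ext t; simp [Cyl]
    rw [this, univ_inter, pow_zero, Real.volume_Ico]
    simp
  | succ n ih =>
    calc volume (Cyl q (n + 1) β ∩ Ico (0:ℝ) 1)
        ≤ volume (⋃ d ∈ (if β 0 = 0 then ({0} : Finset ℕ) else (Finset.range q).erase 0),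
            (fun t : ℝ => (q : ℝ) * t - d) ⁻¹' (Cyl q n (fun j => β (j + 1)) ∩ Ico (0:ℝ) 1)) :=
          measure_mono (Cyl_succ_subset hq n β)
      _ ≤ ∑ d ∈ (if β 0 = 0 then ({0} : Finset ℕ) else (Finset.range q).erase 0),
            volume ((fun t : ℝ => (q : ℝ) * t - d) ⁻¹'
              (Cyl q n (fun j => β (j + 1)) ∩ Ico (0:ℝ) 1)) := measure_biUnion_finset_le _ _
      _ ≤ (((q - 1 : ℕ) : ℝ≥0∞) / q) ^ (n + 1) := ?_
    have hvol : ∀ d : ℕ, volume ((fun t : ℝ => (q : ℝ) * t - d) ⁻¹'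
        (Cyl q n (fun j => β (j + 1)) ∩ Ico (0:ℝ) 1))
        = volume (Cyl q n (fun j => β (j + 1)) ∩ Ico (0:ℝ) 1) / q :=
      fun d => vol_gd hq d ((measurable_Cyl n _).inter measurableSet_Ico)
    have hcard : ((if β 0 = 0 then ({0} : Finset ℕ) else (Finset.range q).erase 0)).card ≤ q - 1 := by
      split
      · simp; omega
      · rw [Finset.card_erase_of_mem (Finset.mem_range.2 (by omega)), Finset.card_range]
    calc ∑ d ∈ (if β 0 = 0 then ({0} : Finset ℕ) else (Finset.range q).erase 0),
            volume ((fun t : ℝ => (q : ℝ) * t - d) ⁻¹'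
              (Cyl q n (fun j => β (j + 1)) ∩ Ico (0:ℝ) 1))
        = ((if β 0 = 0 then ({0} : Finset ℕ) else (Finset.range q).erase 0)).card
            • (volume (Cyl q n (fun j => β (j + 1)) ∩ Ico (0:ℝ) 1) / q) := by
          rw [Finset.sum_congr rfl fun d _ => hvol d, Finset.sum_const]
      _ ≤ ((q - 1 : ℕ) : ℝ≥0∞) * (volume (Cyl q n (fun j => β (j + 1)) ∩ Ico (0:ℝ) 1) / q) := by
          rw [nsmul_eq_mul]
          exact mul_le_mul_left (by exact_mod_cast hcard) _
      _ ≤ ((q - 1 : ℕ) : ℝ≥0∞) * ((((q - 1 : ℕ) : ℝ≥0∞) / q) ^ n / q) := by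
          refine mul_le_mul_right (ENNReal.div_le_div_right (ih _) _) _
      _ = (((q - 1 : ℕ) : ℝ≥0∞) / q) ^ (n + 1) := by
          simp only [ENNReal.div_eq_inv_mul, pow_succ]
          ring

lemma Dlt1 (hq : 3 ≤ q) : (((q - 1 : ℕ) : ℝ≥0∞) / q) < 1 := by
  rw [ENNReal.div_lt_iff (Or.inl (by exact_mod_cast (by omega : q ≠ 0)))
    (Or.inl (ENNReal.natCast_ne_top q))]
  rw [one_mul]
  exact_mod_cast (by omega : q - 1 < q)

end Lac

/-! ### Fiber rigidity and the Fourier estimate -/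

namespace Lac

open Set Real

variable {q : ℕ}

lemma continuous_coe : Continuous ((↑) : Circle → ℂ) := continuous_subtype_val

lemma ff_inj_bits (hq : 3 ≤ q) {t t' : ℝ} (h : ff q t = ff q t') :
    ∀ j, vb q j t = vb q j t' := by
  have hC : Complex.exp ((2 * π * Xf q t : ℝ) * Complex.I)
      = Complex.exp ((2 * π * Xf q t' : ℝ) * Complex.I) := by
    rw [← coe_ff, ← coe_ff, h]
  rw [Complex.exp_eq_exp_iff_exists_int] at hC
  obtain ⟨n, hn⟩ := hC
  have h2 : ((2 * π * Xf q t : ℝ) : ℂ) = ((2 * π * Xf q t' + n * (2 * π) : ℝ) : ℂ) := by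
    apply mul_right_cancel₀ Complex.I_ne_zero
    push_cast at hn ⊢
    linear_combination hn
  have h3 : 2 * π * Xf q t = 2 * π * Xf q t' + n * (2 * π) := by exact_mod_cast h2
  have h4 : (2 * π) * Xf q t = (2 * π) * (Xf q t' + n) := by ring_nf; ring_nf at h3; linarith
  have h5 : Xf q t = Xf q t' + n := by
    have h2π : (2 * π) ≠ 0 := by positivity
    exact mul_left_cancel₀ h2π h4
  have hb1 := Xf_nonneg hq t
  have hb2 := Xf_le_half hq t
  have hb3 := Xf_nonneg hq t'
  have hb4 := Xf_le_half hq t'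
  have hn0 : n = 0 := by
    have hlt1 : (n : ℝ) < 1 := by linarith
    have hlt2 : (-1 : ℝ) < n := by linarith
    have h1 : n < (1 : ℤ) := by exact_mod_cast hlt1
    have h2 : (-1 : ℤ) < n := by exact_mod_cast hlt2
    omega
  rw [hn0] at h5
  push_cast at h5
  have hXf : Xf q t = Xf q t' := by linarith
  exact sum01_inj (cpos hq) (c3 hq) (vb01 (q := q) · t) (vb01 (q := q) · t') hXf

lemma fc_base (hq : 128 ≤ q) (m : ℕ) (hm : 2 * m ≤ q) :
    1 / 2 ≤ ‖(∫ t in Ico (0:ℝ) 1, ((ff q t ^ m : Circle) : ℂ))‖ := by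
  have hq3 : 3 ≤ q := by omega
  have hqR : (0 : ℝ) < q := qpos hq3
  have hc0 : (0:ℝ) < (q:ℝ)⁻¹ := cpos hq3
  have hc1 : (q:ℝ)⁻¹ < 1 := c1 hq3
  have hcq : (q:ℝ)⁻¹ ≤ 1 / 128 := by
    rw [inv_le_comm₀ hqR (by norm_num)]
    calc ((1:ℝ)/128)⁻¹ = 128 := by norm_num
      _ ≤ q := by exact_mod_cast hq
  have hmq : (m : ℝ) ≤ (q : ℝ) / 2 := by
    have : (2 * m : ℕ) ≤ q := hm
    have : ((2 * m : ℕ) : ℝ) ≤ q := by exact_mod_cast this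
    push_cast at this
    linarith
  have hπ := Real.pi_pos
  have hπ4 := Real.pi_le_four
  set c : ℝ := (q:ℝ)⁻¹ with hc
  set f : ℝ → ℂ := fun t => ((ff q t ^ m : Circle) : ℂ) with hfdef
  set g : ℝ → ℂ := fun t => Complex.exp ((2 * π * m * c * vb q 0 t : ℝ) * Complex.I) with hgdef
  set e : ℝ → ℂ := fun t => Complex.exp ((2 * π * m * (Xf q t - vb q 0 t * c) : ℝ) * Complex.I)
    with hedef
  have hsplit : ∀ t, f t = g t * e t := by
    intro t
    rw [hfdef, hgdef, hedef]
    simp only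
    rw [coe_ff_pow, ← Complex.exp_add]
    congr 1
    push_cast
    ring
  -- measurability
  have hg : Measurable g := by
    apply Complex.continuous_exp.measurable.comp
    exact (Complex.measurable_ofReal.comp ((measurable_vb 0).const_mul _)).mul_const _
  have he : Measurable e := by
    apply Complex.continuous_exp.measurable.comp
    exact (Complex.measurable_ofReal.comp
      (((measurable_Xf hq3).sub ((measurable_vb 0).mul_const _)).const_mul _)).mul_const _
  have hf : Measurable f := by
    have hfge : f = fun t => g t * e t := funext hsplit
    rw [hfge]
    exact hg.mul he
  have hIfin : volume (Ico (0:ℝ) 1) < ⊤ := by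
    rw [Real.volume_Ico]; exact ENNReal.ofReal_lt_top
  -- integrability
  have hint : ∀ {h : ℝ → ℂ}, Measurable h → (∀ t, ‖h t‖ ≤ 1) →
      IntegrableOn h (Ico (0:ℝ) 1) volume := by
    intro h hmeas hb
    haveI : IsFiniteMeasure (volume.restrict (Ico (0:ℝ) 1)) :=
      ⟨by rwa [Measure.restrict_apply_univ]⟩
    exact ⟨hmeas.aestronglyMeasurable, HasFiniteIntegral.of_bounded (C := 1) (ae_of_all _ hb)⟩
  have hfb : ∀ t, ‖f t‖ ≤ 1 := by
    intro t
    rw [hfdef]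
    simp only
    rw [Circle.norm_coe]
  have hgb : ∀ t, ‖g t‖ ≤ 1 := by
    intro t
    rw [hgdef]
    simp only
    rw [Complex.norm_exp_ofReal_mul_I]
  have hintf := hint hf hfb
  have hintg := hint hg hgb
  -- the main term
  have hIco : Ico (0:ℝ) 1 = Ico 0 c ∪ Ico c 1 :=
    (Ico_union_Ico_eq_Ico hc0.le hc1.le).symm
  have hg_eq1 : ∀ t ∈ Ico (0:ℝ) c, g t = 1 := by
    intro t ht
    have hvb : vb q 0 t = 0 := by
      rw [vb, pow_zero, one_mul, if_pos]
      rw [Int.fract_eq_self.2 ⟨ht.1, lt_trans ht.2 hc1⟩]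
      exact ht.2
    rw [hgdef]
    simp only
    rw [hvb]
    norm_num
  have hg_eq2 : ∀ t ∈ Ico c (1:ℝ), g t = Complex.exp ((2 * π * m * c : ℝ) * Complex.I) := by
    intro t ht
    have hvb : vb q 0 t = 1 := by
      rw [vb, pow_zero, one_mul, if_neg]
      rw [Int.fract_eq_self.2 ⟨le_trans hc0.le ht.1, ht.2⟩]
      exact not_lt.2 ht.1
    rw [hgdef]
    simp only
    rw [hvb]
    norm_num
  have hIg : ∫ t in Ico (0:ℝ) 1, g t = (c : ℂ) + ((1 - c : ℝ) : ℂ)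
      * Complex.exp ((2 * π * m * c : ℝ) * Complex.I) := by
    rw [hIco, setIntegral_union ((by rw [Set.Ico_disjoint_Ico]; simp [hc0.le] : Disjoint (Ico (0:ℝ) c) (Ico c 1))) measurableSet_Ico
      (hintg.mono_set (by rw [hIco]; exact subset_union_left))
      (hintg.mono_set (by rw [hIco]; exact subset_union_right))]
    rw [setIntegral_congr_fun measurableSet_Ico hg_eq1,
      setIntegral_congr_fun measurableSet_Ico hg_eq2]
    rw [setIntegral_const, setIntegral_const]
    rw [measureReal_def, measureReal_def, Real.volume_Ico, Real.volume_Ico]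
    rw [ENNReal.toReal_ofReal (by linarith), ENNReal.toReal_ofReal (by linarith)]
    rw [sub_zero, Complex.real_smul, Complex.real_smul]
    push_cast
    ring
  have habs_g : 1 - 2 * c ≤ ‖∫ t in Ico (0:ℝ) 1, g t‖ := by
    rw [hIg]
    have h1 : ‖((1 - c : ℝ) : ℂ) * Complex.exp ((2 * π * m * c : ℝ) * Complex.I)‖
        = 1 - c := by
      rw [norm_mul, Complex.norm_exp_ofReal_mul_I,
        mul_one, Complex.norm_real, Real.norm_of_nonneg (by linarith)]
    have h2 : ‖((c:ℝ) : ℂ)‖ = c := by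
      rw [Complex.norm_real, Real.norm_of_nonneg hc0.le]
    calc 1 - 2 * c = (1 - c) - c := by ring
      _ = ‖((1 - c : ℝ) : ℂ) * Complex.exp ((2 * π * m * c : ℝ) * Complex.I)‖
          - ‖-((c:ℝ) : ℂ)‖ := by rw [norm_neg, h1, h2]
      _ ≤ ‖((1 - c : ℝ) : ℂ) * Complex.exp ((2 * π * m * c : ℝ) * Complex.I) - -((c:ℝ):ℂ)‖ :=
          norm_sub_norm_le _ _
      _ = ‖(c : ℂ) + ((1 - c : ℝ) : ℂ) * Complex.exp ((2 * π * m * c : ℝ) * Complex.I)‖ := by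
          rw [sub_neg_eq_add, add_comm]
  -- the error term
  have herr : ∀ t, ‖f t - g t‖ ≤ 16 * c := by
    intro t
    have hR : Xf q t - vb q 0 t * c = c * Xf q (Tq q t) := by
      have hs := Xf_shift hq3 t
      have hcq' : c * (q:ℝ) = 1 := inv_mul_cancel₀ hqR.ne'
      have : c * Xf q (Tq q t) = c * ((q:ℝ) * Xf q t) - c * vb q 0 t := by
        rw [hs]; ring
      rw [this, ← mul_assoc, hcq', one_mul]
      ring
    have hR0 : 0 ≤ Xf q t - vb q 0 t * c := by
      rw [hR]; exact mul_nonneg hc0.le (Xf_nonneg hq3 _)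
    have hR1 : Xf q t - vb q 0 t * c ≤ c * (2 * c) := by
      rw [hR]; exact mul_le_mul_of_nonneg_left (Xf_le hq3 _) hc0.le
    set x : ℝ := 2 * π * m * (Xf q t - vb q 0 t * c) with hx
    have hx0 : 0 ≤ x := by positivity
    have hx1 : x ≤ 2 * π * ((q:ℝ)/2) * (2 * c * c) := by
      rw [hx]
      nlinarith [mul_le_mul_of_nonneg_left (mul_le_mul hmq hR1 hR0 (by positivity : (0:ℝ) ≤ (q:ℝ)/2))
        (by positivity : (0:ℝ) ≤ 2 * π)]
    have hx2 : x ≤ 2 * π * c := by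
      have hqc : (q : ℝ) * c = 1 := mul_inv_cancel₀ hqR.ne'
      nlinarith [hx1]
    have hx3 : x ≤ 1 := by nlinarith [hcq]
    have habs : ‖((x:ℝ) * Complex.I)‖ ≤ 1 := by
      rw [norm_mul, Complex.norm_I, mul_one, Complex.norm_real, Real.norm_of_nonneg hx0]
      exact hx3
    have hexp : ‖e t - 1‖ ≤ 2 * x := by
      have := Complex.norm_exp_sub_one_le habs
      rw [norm_mul, Complex.norm_I, mul_one, Complex.norm_real, Real.norm_of_nonneg hx0] at this
      exact this
    calc ‖f t - g t‖ = ‖g t * (e t - 1)‖ := by rw [hsplit t]; congr 1; ring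
      _ = ‖g t‖ * ‖e t - 1‖ := norm_mul _ _
      _ ≤ 1 * (2 * x) := mul_le_mul (hgb t) hexp (norm_nonneg _) zero_le_one
      _ = 2 * x := one_mul _
      _ ≤ 16 * c := by nlinarith [hx2, mul_le_mul_of_nonneg_right hπ4 hc0.le]
  have herrI : ‖(∫ t in Ico (0:ℝ) 1, f t) - ∫ t in Ico (0:ℝ) 1, g t‖ ≤ 16 * c := by
    rw [← integral_sub hintf hintg]
    have := norm_setIntegral_le_of_norm_le_const (μ := volume) hIfin
      (fun t _ => herr t) (f := fun t => f t - g t)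
    calc ‖∫ t in Ico (0:ℝ) 1, (f t - g t)‖ ≤ 16 * c * (volume (Ico (0:ℝ) 1)).toReal := this
      _ = 16 * c := by rw [Real.volume_Ico, ENNReal.toReal_ofReal (by norm_num)]; ring
  calc (1:ℝ)/2 ≤ (1 - 2 * c) - 16 * c := by nlinarith [hcq]
    _ ≤ ‖∫ t in Ico (0:ℝ) 1, g t‖ - ‖(∫ t in Ico (0:ℝ) 1, f t) - ∫ t in Ico (0:ℝ) 1, g t‖ := by
        have := habs_g; have := herrI; linarith
    _ ≤ ‖∫ t in Ico (0:ℝ) 1, f t‖ := by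
        have h := norm_sub_norm_le (∫ t in Ico (0:ℝ) 1, g t)
          ((∫ t in Ico (0:ℝ) 1, g t) - ∫ t in Ico (0:ℝ) 1, f t)
        have h2 : (∫ t in Ico (0:ℝ) 1, g t) - ((∫ t in Ico (0:ℝ) 1, g t)
          - ∫ t in Ico (0:ℝ) 1, f t) = ∫ t in Ico (0:ℝ) 1, f t := by ring
        rw [h2, norm_sub_rev] at h
        linarith

end Lac

/-! ### Assembly -/

namespace Lac

open Set Real ENNReal

variable {q : ℕ}

lemma restrict_prob : IsProbabilityMeasure (volume.restrict (Ico (0:ℝ) 1)) :=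
  ⟨by rw [Measure.restrict_apply_univ, Real.volume_Ico]; norm_num⟩

lemma measurable_ffpow (hq3 : 3 ≤ q) (n : ℕ) :
    Measurable fun t => ((ff q t ^ n : Circle) : ℂ) := by
  have h : (fun t => ((ff q t ^ n : Circle) : ℂ))
      = fun t => Complex.exp ((n : ℂ) * ((2 * π * Xf q t : ℝ) * Complex.I)) :=
    funext fun t => coe_ff_pow n t
  rw [h]
  apply Complex.continuous_exp.measurable.comp
  exact ((Complex.measurable_ofReal.comp ((measurable_Xf hq3).const_mul _)).mul_const
    Complex.I).const_mul _

lemma fc_nat (hq3 : 3 ≤ q) (n : ℕ) :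
    fc (Measure.map (ff q) (volume.restrict (Ico (0:ℝ) 1))) (n : ℤ)
      = ∫ t in Ico (0:ℝ) 1, ((ff q t ^ n : Circle) : ℂ) := by
  rw [fc]
  simp only [zpow_natCast]
  have hcont : Continuous fun z : Circle => (z : ℂ) ^ n := continuous_coe.pow n
  rw [integral_map (measurable_ff hq3).aemeasurable hcont.aestronglyMeasurable]
  refine integral_congr_ae (ae_of_all _ fun t => ?_)
  show (ff q t : ℂ) ^ n = _
  exact (map_pow Circle.coeHom (ff q t) n).symm

lemma fc_mulq (hq3 : 3 ≤ q) (n : ℕ) :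
    fc (Measure.map (ff q) (volume.restrict (Ico (0:ℝ) 1))) ((q * n : ℕ) : ℤ)
      = fc (Measure.map (ff q) (volume.restrict (Ico (0:ℝ) 1))) (n : ℤ) := by
  rw [fc_nat hq3, fc_nat hq3]
  have h1 : ∀ t : ℝ, ((ff q t ^ (q * n) : Circle) : ℂ) = ((ff q (Tq q t) ^ n : Circle) : ℂ) := by
    intro t
    rw [pow_mul, ff_pow_q hq3]
  calc ∫ t in Ico (0:ℝ) 1, ((ff q t ^ (q * n) : Circle) : ℂ)
      = ∫ t in Ico (0:ℝ) 1, ((ff q (Tq q t) ^ n : Circle) : ℂ) :=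
        integral_congr_ae (ae_of_all _ h1)
    _ = ∫ s in Ico (0:ℝ) 1, ((ff q s ^ n : Circle) : ℂ) := by
        conv_rhs => rw [← (measurePreserving_Tq hq3).map_eq]
        rw [integral_map measurable_Tq.aemeasurable]
        rw [(measurePreserving_Tq hq3).map_eq]
        exact (measurable_ffpow hq3 n).aestronglyMeasurable

lemma atomless (hq3 : 3 ≤ q) (z : Circle) :
    Measure.map (ff q) (volume.restrict (Ico (0:ℝ) 1)) {z} = 0 := by
  rw [Measure.map_apply (measurable_ff hq3) (measurableSet_singleton z),
    Measure.restrict_apply ((measurable_ff hq3) (measurableSet_singleton z))]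
  rcases eq_empty_or_nonempty (ff q ⁻¹' {z} ∩ Ico (0:ℝ) 1) with hne | hne
  · rw [hne]; exact measure_empty
  · obtain ⟨t0, ht0⟩ := hne
    have hsub : ∀ n, ff q ⁻¹' {z} ∩ Ico (0:ℝ) 1 ⊆ Cyl q n (fun j => vb q j t0) ∩ Ico 0 1 := by
      intro n t ⟨htz, htI⟩
      refine ⟨fun j _ => ?_, htI⟩
      have heq : ff q t = ff q t0 := by
        have h1 : ff q t = z := htz
        have h2 : ff q t0 = z := ht0.1
        rw [h1, h2]
      exact ff_inj_bits hq3 heq j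
    have hb : ∀ n, volume (ff q ⁻¹' {z} ∩ Ico (0:ℝ) 1) ≤ (((q - 1 : ℕ) : ℝ≥0∞) / q) ^ n :=
      fun n => le_trans (measure_mono (hsub n)) (Cyl_bound hq3 _ n)
    have htend := ENNReal.tendsto_pow_atTop_nhds_zero_of_lt_one (Dlt1 hq3)
    exact le_antisymm (ge_of_tendsto' htend hb) (by simp)

end Lac

theorem lacunary_semigroup_measure (p : ℕ) (hp : 2 ≤ p) :
    ∃ μ : Measure Circle, IsProbabilityMeasure μ ∧
      (∀ z : Circle, μ {z} = 0) ∧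
      0 < ⨅ k : ℕ, ‖fc μ ((p : ℤ) ^ k)‖ := by
  have hq128 : 128 ≤ p ^ 7 := by
    calc (128 : ℕ) = 2 ^ 7 := by norm_num
      _ ≤ p ^ 7 := Nat.pow_le_pow_left hp 7
  set q : ℕ := p ^ 7 with hqdef
  have hq3 : 3 ≤ q := by omega
  refine ⟨Measure.map (Lac.ff q) (volume.restrict (Set.Ico (0:ℝ) 1)), ?_, ?_, ?_⟩
  · haveI := Lac.restrict_prob
    exact Measure.isProbabilityMeasure_map (Lac.measurable_ff hq3).aemeasurable
  · exact fun z => Lac.atomless hq3 z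
  · have key : ∀ k : ℕ, 1 / 2 ≤ ‖
        (fc (Measure.map (Lac.ff q) (volume.restrict (Set.Ico (0:ℝ) 1))) ((p : ℤ) ^ k))‖ := by
      intro k
      have hcast : ((p : ℤ)) ^ k = ((p ^ k : ℕ) : ℤ) := by push_cast; ring
      rw [hcast]
      have hred : ∀ j r : ℕ, fc (Measure.map (Lac.ff q) (volume.restrict (Set.Ico (0:ℝ) 1)))
          ((p ^ (7 * j + r) : ℕ) : ℤ)
          = fc (Measure.map (Lac.ff q) (volume.restrict (Set.Ico (0:ℝ) 1))) ((p ^ r : ℕ) : ℤ) := by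
        intro j
        induction j with
        | zero => intro r; norm_num
        | succ j ih =>
          intro r
          have hpow : p ^ (7 * (j + 1) + r) = q * p ^ (7 * j + r) := by
            rw [hqdef, show 7 * (j + 1) + r = 7 + (7 * j + r) by ring, pow_add]
          rw [hpow, Lac.fc_mulq hq3, ih r]
      have hk : 7 * (k / 7) + k % 7 = k := Nat.div_add_mod k 7
      rw [← hk, hred]
      rw [Lac.fc_nat hq3]
      apply Lac.fc_base hq128
      have h1 : k % 7 < 7 := Nat.mod_lt _ (by norm_num)
      calc 2 * p ^ (k % 7) ≤ p * p ^ (k % 7) := Nat.mul_le_mul_right _ hp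
        _ = p ^ (k % 7 + 1) := by rw [pow_succ]; ring
        _ ≤ p ^ 7 := Nat.pow_le_pow_right (by omega) (by omega)
    exact lt_of_lt_of_le (by norm_num) (le_ciInf key)
end

section
/- Set m_k = 2^k and n_{k'} = k' for k, k' ≥ 0. Suppose μ is a Borel probability measure on 𝕋 such that μ̂(2^k k') → 1 as k → +∞ uniformly in k' ≥ 0. Then μ is not continuous, i.e., μ has an atom. -/
open MeasureTheory Filter Topology

lemma aux_finite (w : ℕ) (hw : 0 < w) : Set.Finite {x : ℂ | x ^ w = 1} := by
  have hp : (Polynomial.X ^ w - Polynomial.C 1 : Polynomial ℂ) ≠ 0 :=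
    Polynomial.X_pow_sub_C_ne_zero hw 1
  have hf := Polynomial.finite_setOf_isRoot hp
  convert hf using 1
  ext x
  simp [Polynomial.IsRoot, sub_eq_zero]

lemma aux_countable (w : ℕ) (hw : 0 < w) : Set.Countable {z : Circle | (z : ℂ) ^ w = 1} := by
  have he : {z : Circle | (z : ℂ) ^ w = 1} = (fun z : Circle => (z : ℂ)) ⁻¹' {x : ℂ | x ^ w = 1} :=
    rfl
  rw [he]
  exact Set.Countable.preimage_of_injOn (aux_finite w hw).countable
    (Set.injOn_of_injective (fun a b => Subtype.ext))

theorem uniform_convergence_not_continuous (μ : Measure Circle) [IsProbabilityMeasure μ]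
    (h : ∀ γ > (0 : ℝ), ∃ k₀ : ℕ, ∀ k : ℕ, k₀ ≤ k → ∀ k' : ℕ,
      ‖fc μ ((2 : ℤ) ^ k * (k' : ℤ)) - 1‖ < γ) :
    ∃ z : Circle, μ {z} ≠ 0 := by
  by_contra hc
  push_neg at hc
  haveI : NoAtoms μ := ⟨hc⟩
  obtain ⟨k₀, hk₀⟩ := h (1/2) (by norm_num)
  have hk : ∀ k' : ℕ, ‖fc μ ((2 : ℤ) ^ k₀ * (k' : ℤ)) - 1‖ < 1/2 :=
    fun k' => hk₀ k₀ le_rfl k'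
  set w : ℕ := 2 ^ k₀ with hw
  have hwpos : 0 < w := Nat.pow_pos (by norm_num)
  -- rewrite the Fourier coefficient with a natural exponent
  have hfc : ∀ k' : ℕ, fc μ ((2 : ℤ) ^ k₀ * (k' : ℤ)) = ∫ z : Circle, (z : ℂ) ^ (w * k') ∂μ := by
    intro k'
    unfold fc
    congr 1
  have hint : ∀ n : ℕ, Integrable (fun z : Circle => (z : ℂ) ^ n) μ := fun n =>
    Continuous.integrable_of_hasCompactSupport (by continuity)
      (HasCompactSupport.of_compactSpace _)
  -- the set of w-th roots of unity has measure zero (no atoms)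
  have hS : μ {z : Circle | (z : ℂ) ^ w = 1} = 0 :=
    by haveI : NullSingletonClass μ := ⟨hc⟩; exact (aux_countable w hwpos).measure_zero μ
  have hae : ∀ᵐ z : Circle ∂μ, (z : ℂ) ^ w ≠ 1 := by
    rw [ae_iff]
    simpa only [not_not] using hS
  -- Cesàro averages
  set f : ℕ → Circle → ℂ :=
    fun N z => (N : ℂ)⁻¹ * ∑ j ∈ Finset.range N, (z : ℂ) ^ (w * j) with hf
  have hnormz : ∀ z : Circle, ∀ n : ℕ, ‖(z : ℂ) ^ n‖ = 1 := by
    intro z n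
    rw [norm_pow]
    rw [Circle.norm_coe, one_pow]
  -- dominated convergence
  have htend : Tendsto (fun N => ∫ z, f N z ∂μ) atTop (𝓝 0) := by
    have h0 : (0 : ℂ) = ∫ _ : Circle, (0 : ℂ) ∂μ := by simp
    rw [h0]
    apply tendsto_integral_of_dominated_convergence (fun _ => (1 : ℝ))
    · intro N
      exact (continuous_const.mul (continuous_finset_sum _ fun j _ => by
        continuity)).aestronglyMeasurable
    · exact integrable_const 1
    · intro N
      filter_upwards with z
      calc ‖f N z‖ ≤ ‖(N : ℂ)⁻¹‖ * ∑ j ∈ Finset.range N, ‖(z : ℂ) ^ (w * j)‖ := by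
            rw [hf]
            exact (norm_mul_le _ _).trans (by gcongr; exact norm_sum_le _ _)
        _ = ‖(N : ℂ)⁻¹‖ * N := by simp [hnormz z]
        _ ≤ 1 := by
            rcases Nat.eq_zero_or_pos N with h0 | h0
            · simp [h0]
            · rw [norm_inv]
              simp only [Complex.norm_natCast]
              rw [inv_mul_cancel₀ (by positivity)]
    · filter_upwards [hae] with z hz
      set c : ℂ := (z : ℂ) ^ w with hcdef
      have hcnorm : ‖c‖ = 1 := hnormz z w
      have hfN : ∀ N, f N z = (N : ℂ)⁻¹ * ((c ^ N - 1) / (c - 1)) := by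
        intro N
        rw [hf]
        simp only
        congr 1
        rw [← geom_sum_eq hz]
        exact Finset.sum_congr rfl fun j _ => by rw [pow_mul]
      have hbound : ∀ N : ℕ, ‖f N z‖ ≤ (N : ℝ)⁻¹ * (2 / ‖c - 1‖) := by
        intro N
        rw [hfN N, norm_mul, norm_inv, Complex.norm_natCast, norm_div]
        gcongr
        calc ‖c ^ N - 1‖ ≤ ‖c ^ N‖ + ‖(1 : ℂ)‖ := norm_sub_le _ _
          _ = 2 := by rw [norm_pow, hcnorm]; norm_num
      have hlim : Tendsto (fun N : ℕ => (N : ℝ)⁻¹ * (2 / ‖c - 1‖)) atTop (𝓝 0) := by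
        have := (tendsto_inv_atTop_nhds_zero_nat).mul_const (2 / ‖c - 1‖)
        simpa using this
      exact squeeze_zero_norm hbound hlim
  -- identify the integral of f N with the Cesàro sum of Fourier coefficients
  have hI : ∀ N, ∫ z, f N z ∂μ
      = (N : ℂ)⁻¹ * ∑ j ∈ Finset.range N, fc μ ((2 : ℤ) ^ k₀ * (j : ℤ)) := by
    intro N
    rw [hf]
    simp only
    rw [integral_const_mul, integral_finset_sum _ fun j _ => hint (w * j)]
    congr 1
  -- real parts are at least 1/2
  have hRefc : ∀ j : ℕ, (1 : ℝ)/2 ≤ (fc μ ((2 : ℤ) ^ k₀ * (j : ℤ))).re := by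
    intro j
    have h1 := hk j
    have h2 : |(fc μ ((2 : ℤ) ^ k₀ * (j : ℤ)) - 1).re|
        ≤ ‖fc μ ((2 : ℤ) ^ k₀ * (j : ℤ)) - 1‖ := Complex.abs_re_le_norm _
    have h3 : (fc μ ((2 : ℤ) ^ k₀ * (j : ℤ)) - 1).re
        = (fc μ ((2 : ℤ) ^ k₀ * (j : ℤ))).re - 1 := by simp
    have h4 := neg_abs_le (fc μ ((2 : ℤ) ^ k₀ * (j : ℤ)) - 1).re
    linarith
  have hRe : ∀ N : ℕ, 1 ≤ N → (1 : ℝ)/2 ≤ (∫ z, f N z ∂μ).re := by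
    intro N hN
    rw [hI N]
    have hcast : (N : ℂ)⁻¹ = (((N : ℝ)⁻¹ : ℝ) : ℂ) := by push_cast; ring
    rw [hcast, Complex.re_ofReal_mul, Complex.re_sum]
    have hsum : (N : ℝ) * (1/2) ≤ ∑ j ∈ Finset.range N, (fc μ ((2 : ℤ) ^ k₀ * (j : ℤ))).re := by
      calc (N : ℝ) * (1/2) = ∑ _j ∈ Finset.range N, (1 : ℝ)/2 := by
            rw [Finset.sum_const, Finset.card_range]; ring
        _ ≤ _ := Finset.sum_le_sum fun j _ => hRefc j
    have hNpos : (0 : ℝ) < N := by exact_mod_cast hN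
    calc (1 : ℝ)/2 = (N : ℝ)⁻¹ * ((N : ℝ) * (1/2)) := by field_simp
      _ ≤ _ := by gcongr
  -- contradiction
  have hlimre : Tendsto (fun N => (∫ z, f N z ∂μ).re) atTop (𝓝 (0 : ℝ)) := by
    have h5 := (Complex.continuous_re.tendsto 0).comp htend
    simpa [Function.comp_def] using h5
  have hfin : (1 : ℝ)/2 ≤ 0 :=
    ge_of_tendsto hlimre (by filter_upwards [eventually_ge_atTop 1] with N hN using hRe N hN)
  norm_num at hfin
end

section
/- Suppose Q ⊆ ℤ is such that every continuous (atomless) Borel probability measure μ on 𝕋 satisfies inf_{n∈Q} |μ̂(n)| = 0. Then every continuous Borel probability measure μ on 𝕋 satisfies liminf_{|n|→∞, n∈Q} |μ̂(n)| = 0, provided there exists a continuous probability measure ρ on 𝕋 with ρ̂(n) > 0 for every n ∈ ℤ and ρ̂(n) → 0 as |n| → ∞. -/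
open MeasureTheory Filter Topology
open scoped ENNReal

lemma continuous_circle_zpow (n : ℤ) : Continuous (fun z : Circle => (z : ℂ) ^ n) :=
  continuous_subtype_val.zpow₀ n (fun z => Or.inl (Circle.coe_ne_zero z))

lemma norm_circle_zpow (z : Circle) (n : ℤ) : ‖(z : ℂ) ^ n‖ = 1 := by
  rw [norm_zpow]
  rw [Circle.norm_coe, one_zpow]

lemma integrable_circle_zpow (μ : Measure Circle) [IsFiniteMeasure μ] (n : ℤ) :
    Integrable (fun z : Circle => (z : ℂ) ^ n) μ := by
  refine (integrable_const (1 : ℝ)).mono' ((continuous_circle_zpow n).aestronglyMeasurable) ?_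
  filter_upwards with z
  rw [norm_circle_zpow]

lemma fc_abs_le_one (μ : Measure Circle) [IsProbabilityMeasure μ] (n : ℤ) :
    ‖fc μ n‖ ≤ 1 := by
  have := norm_integral_le_of_norm_le_const (μ := μ) (C := 1)
    (f := fun z : Circle => (z : ℂ) ^ n) (by filter_upwards with z; rw [norm_circle_zpow])
  simpa [fc] using this

lemma fc_neg (μ : Measure Circle) [IsFiniteMeasure μ] (n : ℤ) :
    fc μ (-n) = (starRingEnd ℂ) (fc μ n) := by
  rw [fc, fc, ← integral_conj]
  congr 1
  funext z
  rw [map_zpow₀, ← Circle.coe_inv_eq_conj, Circle.coe_inv, inv_zpow, zpow_neg]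

/-- the "convolution square" `μ * μ̃` -/
noncomputable def convSq (μ : Measure Circle) : Measure Circle :=
  Measure.map (fun p : Circle × Circle => p.1 * p.2⁻¹) (μ.prod μ)

lemma measurable_convMap :
    Measurable (fun p : Circle × Circle => p.1 * p.2⁻¹) :=
  (continuous_fst.mul continuous_snd.inv).measurable

instance convSq_prob (μ : Measure Circle) [IsProbabilityMeasure μ] :
    IsProbabilityMeasure (convSq μ) :=
  Measure.isProbabilityMeasure_map measurable_convMap.aemeasurable

lemma convSq_atomless (μ : Measure Circle) [IsProbabilityMeasure μ]
    (hμ : ∀ z : Circle, μ {z} = 0) (a : Circle) : convSq μ {a} = 0 := by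
  rw [convSq, Measure.map_apply measurable_convMap (measurableSet_singleton a),
    Measure.prod_apply (measurable_convMap (measurableSet_singleton a))]
  have : ∀ x : Circle, (Prod.mk x ⁻¹' ((fun p : Circle × Circle => p.1 * p.2⁻¹) ⁻¹' {a}))
      = {a⁻¹ * x} := by
    intro x
    ext w
    simp only [Set.mem_preimage, Set.mem_singleton_iff]
    constructor
    · intro hw
      have hw2 : w = (x * w⁻¹)⁻¹ * x := by group
      rw [hw2, hw]
    · rintro rfl
      group
  simp only [this, hμ]
  simp

lemma fc_convSq (μ : Measure Circle) [IsProbabilityMeasure μ] (n : ℤ) :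
    fc (convSq μ) n = ((‖fc μ n‖) ^ 2 : ℝ) := by
  rw [fc, convSq, integral_map measurable_convMap.aemeasurable
    ((continuous_circle_zpow n).aestronglyMeasurable)]
  have : ∀ p : Circle × Circle, ((p.1 * p.2⁻¹ : Circle) : ℂ) ^ n
      = ((p.1 : ℂ) ^ n) * ((p.2 : ℂ) ^ (-n)) := by
    intro p
    push_cast
    rw [mul_zpow, inv_zpow, zpow_neg]
  simp_rw [this]
  rw [integral_prod_mul (μ := μ) (ν := μ) (fun z : Circle => (z : ℂ) ^ n)
    (fun z : Circle => (z : ℂ) ^ (-n))]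
  have h1 : (∫ y : Circle, (y : ℂ) ^ (-n) ∂μ) = (starRingEnd ℂ) (fc μ n) := fc_neg μ n
  rw [h1]
  show fc μ n * _ = _
  rw [Complex.mul_conj, Complex.normSq_eq_norm_sq]

theorem liminf_zero_of_inf_zero (Q : Set ℤ)
    (h : ∀ μ : Measure Circle, IsProbabilityMeasure μ → (∀ z : Circle, μ {z} = 0) →
      (⨅ n : Q, ‖fc μ n‖) = 0)
    (hρ : ∃ ρ : Measure Circle, IsProbabilityMeasure ρ ∧ (∀ z : Circle, ρ {z} = 0) ∧
      (∀ n : ℤ, fc ρ n = ((fc ρ n).re : ℂ) ∧ 0 < (fc ρ n).re) ∧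
      Tendsto (fun n : ℤ => fc ρ n) cofinite (𝓝 0)) :
    ∀ μ : Measure Circle, IsProbabilityMeasure μ → (∀ z : Circle, μ {z} = 0) →
      Filter.liminf (fun n : ℤ => ‖fc μ n‖) (cofinite ⊓ Filter.principal Q)
        = 0 := by
  obtain ⟨ρ, hρprob, hρatom, hρpos, -⟩ := hρ
  intro μ hμprob hμatom
  by_cases hQ : Q.Finite
  · -- the filter is trivial
    have hbot : (cofinite ⊓ Filter.principal Q : Filter ℤ) = ⊥ := by
      rw [inf_principal_eq_bot, Filter.mem_cofinite, compl_compl]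
      exact hQ
    rw [hbot]
    rw [Filter.liminf_eq]
    have : {a : ℝ | ∀ᶠ n : ℤ in ⊥, a ≤ ‖fc μ n‖} = Set.univ := by
      ext a; simp
    rw [this, Real.sSup_univ]
  · -- main case : Q infinite
    have hne : (cofinite ⊓ Filter.principal Q : Filter ℤ).NeBot := by
      rw [Filter.neBot_iff]
      intro hc
      rw [inf_principal_eq_bot, Filter.mem_cofinite, compl_compl] at hc
      exact hQ hc
    -- the auxiliary measure ν
    set ν : Measure Circle := (2 : ℝ≥0∞)⁻¹ • (convSq μ + ρ) with hν
    have hνprob : IsProbabilityMeasure ν := by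
      constructor
      rw [hν]
      simp [measure_univ]
      exact ENNReal.inv_two_add_inv_two
    have hνatom : ∀ z : Circle, ν {z} = 0 := by
      intro z
      rw [hν]
      simp [convSq_atomless μ hμatom z, hρatom z]
    -- formula for fc ν
    have hfcν : ∀ n : ℤ, fc ν n
        = ((((‖fc μ n‖) ^ 2 + (fc ρ n).re) / 2 : ℝ) : ℂ) := by
      intro n
      rw [fc, hν, integral_smul_measure, integral_add_measure
        (integrable_circle_zpow (convSq μ) n) (integrable_circle_zpow ρ n)]
      have h1 : (∫ z : Circle, (z : ℂ) ^ n ∂(convSq μ)) = fc (convSq μ) n := rfl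
      have h2 : (∫ z : Circle, (z : ℂ) ^ n ∂ρ) = fc ρ n := rfl
      rw [h1, h2, fc_convSq, (hρpos n).1]
      have h3 : ((2 : ℝ≥0∞)⁻¹).toReal = (2 : ℝ)⁻¹ := by simp
      rw [h3, Complex.real_smul, Complex.ofReal_re]
      push_cast
      ring
    have habsν : ∀ n : ℤ, ‖fc ν n‖
        = ((‖fc μ n‖) ^ 2 + (fc ρ n).re) / 2 := by
      intro n
      rw [hfcν n, Complex.norm_real, Real.norm_eq_abs, abs_of_nonneg]
      have h2 := (hρpos n).2
      have h3 : (0:ℝ) ≤ (‖fc μ n‖) ^ 2 := sq_nonneg _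
      linarith
    have hνposabs : ∀ n : ℤ, 0 < ‖fc ν n‖ := by
      intro n
      rw [habsν n]
      have h2 := (hρpos n).2
      have h3 : (0:ℝ) ≤ (‖fc μ n‖) ^ 2 := sq_nonneg _
      linarith
    have hinf : (⨅ n : Q, ‖fc ν n‖) = 0 := h ν hνprob hνatom
    -- liminf = 0
    have hQne : Q.Nonempty := Set.Infinite.nonempty hQ
    have : Nonempty Q := hQne.to_subtype
    refine le_antisymm ?_ ?_
    · -- liminf ≤ 0
      refine le_of_forall_pos_le_add ?_
      intro ε hε
      rw [zero_add]
      refine liminf_le_of_frequently_le ?_ ?_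
      · -- frequently abs (fc μ n) ≤ ε
        rw [Filter.Frequently]
        intro hev
        rw [eventually_inf_principal, Filter.eventually_cofinite] at hev
        -- hev : {n | ¬ (n ∈ Q → ¬ abs (fc μ n) ≤ ε)} finite
        set S : Set ℤ := {n : ℤ | ¬(n ∈ Q → ¬‖fc μ n‖ ≤ ε)} with hS
        have hSfin : S.Finite := hev
        -- get a positive lower bound c for abs (fc ν n) on S
        obtain ⟨c, hc0, hc⟩ : ∃ c > 0, ∀ n ∈ S, c ≤ ‖fc ν n‖ := by
          rcases hSfin.toFinset.eq_empty_or_nonempty with hST | hST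
          · exact ⟨1, one_pos, fun n hn => by
              simp only [← hSfin.mem_toFinset, hST] at hn; simp at hn⟩
          · refine ⟨hSfin.toFinset.inf' hST (fun n => ‖fc ν n‖), ?_, ?_⟩
            · rw [gt_iff_lt, Finset.lt_inf'_iff]
              intro n _
              exact hνposabs n
            · intro n hn
              exact Finset.inf'_le _ (hSfin.mem_toFinset.2 hn)
        -- lower bound on all of Q
        have hlb : ∀ n : Q, min c (ε ^ 2 / 2) ≤ ‖fc ν n‖ := by
          rintro ⟨n, hnQ⟩
          by_cases hnS : n ∈ S
          · exact le_trans (min_le_left _ _) (hc n hnS)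
          · refine le_trans (min_le_right _ _) ?_
            simp only [hS, Set.mem_setOf_eq, not_not] at hnS
            have hεn : ε < ‖fc μ n‖ := lt_of_not_ge (hnS hnQ)
            rw [habsν n]
            have h1 : ε ^ 2 ≤ (‖fc μ n‖) ^ 2 :=
              pow_le_pow_left₀ hε.le hεn.le 2
            have h2 := (hρpos n).2
            linarith
        have : min c (ε ^ 2 / 2) ≤ (⨅ n : Q, ‖fc ν n‖) := le_ciInf hlb
        rw [hinf] at this
        have hpos : 0 < min c (ε ^ 2 / 2) := lt_min hc0 (by positivity)
        linarith
      · -- bounded below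
        exact Filter.isBoundedUnder_of ⟨0, fun n => norm_nonneg _⟩
    · -- 0 ≤ liminf
      refine le_liminf_of_le ?_ ?_
      · exact Filter.isCoboundedUnder_ge_of_le _ (x := 1) (fun n => fc_abs_le_one μ n)
      · filter_upwards with n using norm_nonneg _
end

section
/- Let (r_k)_{k≥0} be a sequence of positive integers with r_k → +∞. Let (n_l)_{l≥0} be the strictly increasing enumeration of the set {j·2^k : k ≥ 0, 1 ≤ j ≤ r_k}. Then n_{l+1}/n_l → 1 as l → +∞. -/
open Filter Topology

lemma key_gap (r : ℕ → ℕ) (hrtop : Tendsto r atTop atTop)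
    (n : ℕ → ℕ) (hn : StrictMono n)
    (hrange : Set.range n = {m : ℕ | ∃ k j : ℕ, 1 ≤ j ∧ j ≤ r k ∧ m = j * 2 ^ k})
    (M : ℕ) (hM : 0 < M) :
    ∀ᶠ l in atTop, n (l + 1) ≤ n l + n l / M := by
  obtain ⟨K, hK⟩ := eventually_atTop.mp (hrtop.eventually_ge_atTop (2 * M))
  filter_upwards [eventually_ge_atTop (M * 2 ^ K)] with l hl
  set x := n l with hxdef
  have hx : M * 2 ^ K ≤ x := le_trans hl hn.le_apply
  have hx0 : 0 < x := lt_of_lt_of_le (by positivity) hx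
  have hMx : M ≤ x := le_trans (Nat.le_mul_of_pos_right M (by positivity)) hx
  have hxM : 1 ≤ x / M := (Nat.one_le_div_iff hM).2 hMx
  set k := Nat.log 2 (x / M) with hkdef
  have hkK : K ≤ k := by
    apply (Nat.le_log_iff_pow_le one_lt_two (by omega)).2
    rw [Nat.le_div_iff_mul_le hM, mul_comm]
    exact hx
  have h2k : 2 ^ k ≤ x / M := Nat.pow_log_le_self 2 (by omega)
  have h2k' : x / M < 2 ^ (k + 1) := Nat.lt_pow_succ_log_self one_lt_two _
  have hx2M : x < 2 * M * 2 ^ k := by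
    have h := (Nat.div_lt_iff_lt_mul hM).1 h2k'
    calc x < 2 ^ (k + 1) * M := h
      _ = 2 * M * 2 ^ k := by ring
  have hp0 : 0 < 2 ^ k := pow_pos two_pos k
  set j := x / 2 ^ k + 1 with hjdef
  have hj2M : j ≤ 2 * M := by
    have h : x / 2 ^ k < 2 * M := (Nat.div_lt_iff_lt_mul hp0).2 hx2M
    exact h
  have hjr : j ≤ r k := le_trans hj2M (hK k hkK)
  have hmem : j * 2 ^ k ∈ Set.range n := by
    rw [hrange]
    exact ⟨k, j, Nat.le_add_left 1 _, hjr, rfl⟩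
  obtain ⟨l', hl'⟩ := hmem
  have hjexp : j * 2 ^ k = x / 2 ^ k * 2 ^ k + 2 ^ k := by
    rw [hjdef, add_mul, one_mul]
  have hgt : x < j * 2 ^ k :=
    (Nat.div_lt_iff_lt_mul hp0).1 (Nat.lt_succ_self _)
  have hle : j * 2 ^ k ≤ x + x / M := by
    rw [hjexp]
    exact add_le_add (Nat.div_mul_le_self x _) h2k
  have hll : l < l' := by
    rw [← hn.lt_iff_lt]
    rw [hl']
    exact hgt
  have hmono : n (l + 1) ≤ n l' := hn.monotone (by omega)
  rw [hl'] at hmono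
  exact le_trans hmono hle

theorem ratio_tendsto_one (r : ℕ → ℕ) (hr : ∀ k, 0 < r k) (hrtop : Tendsto r atTop atTop)
    (n : ℕ → ℕ) (hn : StrictMono n)
    (hrange : Set.range n = {m : ℕ | ∃ k j : ℕ, 1 ≤ j ∧ j ≤ r k ∧ m = j * 2 ^ k}) :
    Tendsto (fun l => (n (l + 1) : ℝ) / (n l : ℝ)) atTop (𝓝 1) := by
  rw [Metric.tendsto_atTop]
  intro ε hε
  obtain ⟨M, hMε⟩ := exists_nat_gt (1 / ε)
  have hM0 : 0 < M := by
    have : (0 : ℝ) < M := lt_of_le_of_lt (by positivity) hMε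
    exact_mod_cast this
  have hM0R : (0 : ℝ) < M := by exact_mod_cast hM0
  obtain ⟨N, hN⟩ := eventually_atTop.mp (key_gap r hrtop n hn hrange M hM0)
  refine ⟨max N 1, fun l hl => ?_⟩
  have hl1 : 1 ≤ l := le_trans (le_max_right _ _) hl
  have hlN : N ≤ l := le_trans (le_max_left _ _) hl
  have hb : 0 < n l := lt_of_lt_of_le (by omega) hn.le_apply
  have hbR : (0 : ℝ) < n l := by exact_mod_cast hb
  have hab : n l < n (l + 1) := hn (lt_add_one l)
  have hub : (n (l + 1) : ℝ) ≤ (n l : ℝ) + (n l : ℝ) / M := by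
    have h := hN l hlN
    have hcast : ((n l + n l / M : ℕ) : ℝ) ≤ (n l : ℝ) + (n l : ℝ) / M := by
      push_cast
      exact add_le_add le_rfl Nat.cast_div_le
    exact le_trans (by exact_mod_cast h) hcast
  have h1 : 1 ≤ (n (l + 1) : ℝ) / n l := by
    rw [le_div_iff₀ hbR, one_mul]
    exact_mod_cast hab.le
  have h2 : (n (l + 1) : ℝ) / n l ≤ 1 + 1 / M := by
    rw [div_le_iff₀ hbR]
    have hring : (1 + 1 / (M : ℝ)) * n l = n l + (n l : ℝ) / M := by
      field_simp
    linarith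
  have hMε' : 1 / (M : ℝ) < ε := by
    have h := (div_lt_iff₀ hε).mp hMε
    rw [div_lt_iff₀ hM0R]
    linarith
  rw [Real.dist_eq]
  rw [abs_lt]
  constructor <;> linarith
end

section
/- Let (n_k)_{k≥0} be a strictly increasing sequence of positive integers with n_0 = 1, and let ν be a finite complex Borel measure on 𝕋 with Re ν̂(1) < 1. Suppose there exists an at most countable set C ⊆ 𝕋 and a strictly increasing sequence (N_j)_{j≥1} of positive integers such that (1/N_j)·Σ_{k=1}^{N_j} λ^{n_k} → ν̂(1) as j → +∞ for every λ ∈ 𝕋 \ C. Then for every γ ∈ (0, 1 − Re ν̂(1)), every Borel probability measure μ on 𝕋 with sup_{k≥0}(1 − Re μ̂(n_k)) < γ has an atom. -/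
open MeasureTheory Filter Topology

lemma circle_norm_coe (z : Circle) : ‖(z : ℂ)‖ = 1 := by
  simpa using Circle.norm_coe z

lemma cont_pow (m : ℕ) : Continuous (fun z : Circle => (z : ℂ) ^ m) :=
  (continuous_subtype_val.pow m)

lemma integrable_pow (μ : Measure Circle) [IsProbabilityMeasure μ] (m : ℕ) :
    Integrable (fun z : Circle => (z : ℂ) ^ m) μ := by
  refine (cont_pow m).integrable_of_hasCompactSupport ?_
  exact HasCompactSupport.of_compactSpace _

theorem kazhdan_of_almost_uniform_distribution (n : ℕ → ℕ) (hn : StrictMono n)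
    (hn0 : n 0 = 1) (c : ℂ) (hc : c.re < 1)
    (h : ∃ C : Set Circle, C.Countable ∧ ∃ N : ℕ → ℕ, StrictMono N ∧ (∀ j, 0 < N j) ∧
      ∀ z : Circle, z ∉ C →
        Tendsto (fun j => (N j : ℂ)⁻¹ * ∑ k ∈ Finset.Icc 1 (N j), (z : ℂ) ^ n k)
          atTop (𝓝 c)) :
    ∀ γ : ℝ, 0 < γ → γ < 1 - c.re →
      ∀ μ : Measure Circle, IsProbabilityMeasure μ →
        (⨆ k : ℕ, (1 - (fc μ (n k : ℤ)).re)) < γ → ∃ z : Circle, μ {z} ≠ 0 := by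
  intro γ hγ0 hγ μ hμ hsup
  by_contra hno
  push_neg at hno
  have hnoatom : NullSingletonClass μ := ⟨fun z => hno z⟩
  obtain ⟨C, hC, N, hN, hNpos, htend⟩ := h
  -- each Fourier coefficient bound
  have hfcle : ∀ m : ℕ, ‖fc μ (m : ℤ)‖ ≤ 1 := by
    intro m
    have : ‖fc μ (m : ℤ)‖ ≤ 1 * (μ Set.univ).toReal := by
      refine norm_integral_le_of_norm_le_const ?_
      filter_upwards with z
      rw [zpow_natCast, norm_pow, circle_norm_coe, one_pow]
    simpa using this
  have hbdd : BddAbove (Set.range fun k : ℕ => 1 - (fc μ (n k : ℤ)).re) := by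
    refine ⟨2, ?_⟩
    rintro x ⟨k, rfl⟩
    show 1 - (fc μ (n k : ℤ)).re ≤ 2
    have h1 : |(fc μ (n k : ℤ)).re| ≤ 1 :=
      (Complex.abs_re_le_norm _).trans (hfcle (n k))
    have := abs_le.1 h1
    linarith [this.1]
  have hk : ∀ k : ℕ, 1 - (fc μ (n k : ℤ)).re < γ := fun k =>
    lt_of_le_of_lt (le_ciSup hbdd k) hsup
  -- dominated convergence
  set F : ℕ → Circle → ℂ := fun j z => (N j : ℂ)⁻¹ * ∑ k ∈ Finset.Icc 1 (N j), (z : ℂ) ^ n k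
  have hFm : ∀ j, AEStronglyMeasurable (F j) μ := by
    intro j
    exact (continuous_const.mul (continuous_finset_sum _ fun k _ => cont_pow (n k))).aestronglyMeasurable
  have hFb : ∀ j, ∀ᵐ z ∂μ, ‖F j z‖ ≤ (1 : ℝ) := by
    intro j
    filter_upwards with z
    have h1 : ‖∑ k ∈ Finset.Icc 1 (N j), (z : ℂ) ^ n k‖ ≤ (N j : ℝ) := by
      calc ‖∑ k ∈ Finset.Icc 1 (N j), (z : ℂ) ^ n k‖
          ≤ ∑ k ∈ Finset.Icc 1 (N j), ‖(z : ℂ) ^ n k‖ := norm_sum_le _ _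
        _ = ∑ k ∈ Finset.Icc 1 (N j), (1 : ℝ) := by
            refine Finset.sum_congr rfl fun k _ => ?_
            rw [norm_pow, circle_norm_coe, one_pow]
        _ = (N j : ℝ) := by simp
    have hNj : (0 : ℝ) < (N j : ℝ) := by exact_mod_cast hNpos j
    calc ‖F j z‖ = (N j : ℝ)⁻¹ * ‖∑ k ∈ Finset.Icc 1 (N j), (z : ℂ) ^ n k‖ := by
          simp [F, norm_mul, abs_of_pos hNj]
      _ ≤ (N j : ℝ)⁻¹ * (N j : ℝ) := by
          exact mul_le_mul_of_nonneg_left h1 (by positivity)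
      _ = 1 := inv_mul_cancel₀ hNj.ne'
  have hCzero : μ C = 0 := hC.measure_zero μ
  have hae : ∀ᵐ z ∂μ, Tendsto (fun j => F j z) atTop (𝓝 c) := by
    filter_upwards [measure_eq_zero_iff_ae_notMem.mp hCzero] with z hz
    exact htend z hz
  have hDCT : Tendsto (fun j => ∫ z, F j z ∂μ) atTop (𝓝 (∫ _ : Circle, c ∂μ)) := by
    refine tendsto_integral_of_dominated_convergence (fun _ => (1 : ℝ)) hFm
      (integrable_const 1) hFb hae
  have hint : (∫ _ : Circle, c ∂μ) = c := by simp
  rw [hint] at hDCT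
  -- compute the integral
  have hIeq : ∀ j, (∫ z, F j z ∂μ) =
      (N j : ℂ)⁻¹ * ∑ k ∈ Finset.Icc 1 (N j), fc μ (n k : ℤ) := by
    intro j
    simp only [F]
    rw [integral_const_mul, integral_finset_sum _ (fun k _ => integrable_pow μ (n k))]
    simp [fc]
  -- real part bound
  have hre : ∀ j, 1 - γ ≤ ((∫ z, F j z ∂μ)).re := by
    intro j
    rw [hIeq j]
    have hNj : (0 : ℝ) < (N j : ℝ) := by exact_mod_cast hNpos j
    have hcard : (Finset.Icc 1 (N j)).card = N j := by
      simp [Nat.card_Icc]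
    have : ((N j : ℂ)⁻¹ * ∑ k ∈ Finset.Icc 1 (N j), fc μ (n k : ℤ)).re
        = (N j : ℝ)⁻¹ * ∑ k ∈ Finset.Icc 1 (N j), (fc μ (n k : ℤ)).re := by
      rw [show ((N j : ℂ))⁻¹ = ((((N j : ℝ))⁻¹ : ℝ) : ℂ) by push_cast; ring]
      rw [Complex.re_ofReal_mul, Complex.re_sum]
    rw [this]
    have hsum : (N j : ℝ) * (1 - γ) ≤ ∑ k ∈ Finset.Icc 1 (N j), (fc μ (n k : ℤ)).re := by
      calc (N j : ℝ) * (1 - γ) = ∑ _k ∈ Finset.Icc 1 (N j), (1 - γ) := by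
            rw [Finset.sum_const, hcard, nsmul_eq_mul]
        _ ≤ _ := Finset.sum_le_sum fun k _ => by linarith [hk k]
    calc 1 - γ = (N j:ℝ)⁻¹ * ((N j:ℝ) * (1 - γ)) := by
          field_simp
      _ ≤ (N j:ℝ)⁻¹ * ∑ k ∈ Finset.Icc 1 (N j), (fc μ (n k : ℤ)).re :=
          mul_le_mul_of_nonneg_left hsum (by positivity)
  have htre : Tendsto (fun j => ((∫ z, F j z ∂μ)).re) atTop (𝓝 c.re) :=
    (Complex.continuous_re.tendsto c).comp hDCT
  have : 1 - γ ≤ c.re := ge_of_tendsto htre (Eventually.of_forall hre)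
  linarith
end
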